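/- For every a ∈ 𝐚, dim Ŵ_a = k̄¹_a − m_a and Ŵ_a ⊆ W̄_a. -/

import Mathlib

open MeasureTheory Set Filter

noncomputable section

namespace KnotWavelet

/-- The space `L²(J)` for `J ⊆ ℝ`. -/
abbrev L2S (J : Set ℝ) := Lp ℝ 2 (volume.restrict J)

/-- `f ∈ L²(J)` is supported (a.e.) in `I`. -/
def SuppIn (J : Set ℝ) (f : L2S J) (I : Set ℝ) : Prop :=
  ∀ᵐ x ∂(volume.restrict J), x ∉ I → f x = 0

/-- `G_I`, the members of `G` supported in `I`. -/
def suppSet (J : Set ℝ) (G : Set (L2S J)) (I : Set ℝ) : Set (L2S J) :=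
  {g ∈ G | SuppIn J g I}

/-- For a subspace `V`, the subspace of members supported in `I`. -/
def suppSub (J : Set ℝ) (V : Submodule ℝ (L2S J)) (I : Set ℝ) : Submodule ℝ (L2S J) where
  carrier := {f | f ∈ V ∧ SuppIn J f I}
  zero_mem' := ⟨V.zero_mem, by
    filter_upwards [Lp.coeFn_zero ℝ 2 (volume.restrict J)] with x hx _
    simpa using hx⟩
  add_mem' := by
    rintro f g ⟨hfV, hf⟩ ⟨hgV, hg⟩
    refine ⟨V.add_mem hfV hgV, ?_⟩
    filter_upwards [Lp.coeFn_add f g, hf, hg] with x hx h1 h2 hxI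
    rw [hx]
    simp [Pi.add_apply, h1 hxI, h2 hxI]
  smul_mem' := by
    rintro c f ⟨hfV, hf⟩
    refine ⟨V.smul_mem c hfV, ?_⟩
    filter_upwards [Lp.coeFn_smul c f, hf] with x hx h1 hxI
    rw [hx]
    simp [h1 hxI]

/-- The successor `a₊` of `a` in `ks`, as an extended real (`+∞` if there is none). -/
def succE (ks : Set ℝ) (a : ℝ) : EReal := sInf ((fun x : ℝ => (x : EReal)) '' {b ∈ ks | a < b})

/-- The predecessor `a₋` of `a` in `ks`, as an extended real (`−∞` if there is none). -/
def predE (ks : Set ℝ) (a : ℝ) : EReal := sSup ((fun x : ℝ => (x : EReal)) '' {b ∈ ks | b < a})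

/-- The successor `a₊` of `a` in `ks` as a real number (junk value if there is none). -/
def succR (ks : Set ℝ) (a : ℝ) : ℝ := sInf {b ∈ ks | a < b}

/-- The interval `[a, a₊]`. -/
def IccS (ks : Set ℝ) (a : ℝ) : Set ℝ := {x | a ≤ x ∧ (x : EReal) ≤ succE ks a}

/-- The interval `[a₋, a₊]`. -/
def IccPS (ks : Set ℝ) (a : ℝ) : Set ℝ :=
  {x | predE ks a ≤ (x : EReal) ∧ (x : EReal) ≤ succE ks a}

/-- The interval `[a₋, a]`. -/
def IccP (ks : Set ℝ) (a : ℝ) : Set ℝ := {x | predE ks a ≤ (x : EReal) ∧ x ≤ a}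

/-- The interval `(a, a₊)`. -/
def IooS (ks : Set ℝ) (a : ℝ) : Set ℝ := {x | a < x ∧ (x : EReal) < succE ks a}

/-- The interval `[a₊, ∞)` (empty if `a₊ = +∞`). -/
def IciS (ks : Set ℝ) (a : ℝ) : Set ℝ := {x | succE ks a ≤ (x : EReal)}

/-- `ks` is a knot sequence in the interval `J`: it is a subset of `J` with at least three
elements, has no cluster (accumulation) point in `J`, and `inf ks = inf J`, `sup ks = sup J`
(as extended reals). -/
structure IsKnotSeq (J ks : Set ℝ) : Prop where
  subset : ks ⊆ J
  nontrivial : ∃ x y z : ℝ, x ∈ ks ∧ y ∈ ks ∧ z ∈ ks ∧ x ≠ y ∧ x ≠ z ∧ y ≠ z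
  noCluster : ∀ x ∈ J, ¬ AccPt x (Filter.principal ks)
  inf_eq : sInf ((fun x : ℝ => (x : EReal)) '' ks) = sInf ((fun x : ℝ => (x : EReal)) '' J)
  sup_eq : sSup ((fun x : ℝ => (x : EReal)) '' ks) = sSup ((fun x : ℝ => (x : EReal)) '' J)

/-- `a'` is the successor of `a` in `ks`. -/
def IsSucc (ks : Set ℝ) (a a' : ℝ) : Prop :=
  a ∈ ks ∧ a' ∈ ks ∧ a < a' ∧ ∀ b ∈ ks, b ≤ a ∨ a' ≤ b

/-- A collection `Φ ⊆ L²(J)` is locally finite: on each compact interval `K ⊆ J` all but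
finitely many members of `Φ` vanish (a.e.) on `K`. -/
def LocFin (J : Set ℝ) (Φ : Set (L2S J)) : Prop :=
  ∀ K : Set ℝ, IsCompact K → K ⊆ J →
    {φ ∈ Φ | ¬ ∀ᵐ x ∂(volume.restrict J), x ∈ K → φ x = 0}.Finite

/-- `Φ̆_a := Φ_{[a,a₊]}`. -/
def breveAt (J : Set ℝ) (ks : Set ℝ) (Φ : Set (L2S J)) (a : ℝ) : Set (L2S J) :=
  suppSet J Φ (IccS ks a)

open Classical in
/-- `Φ̆_{a₋}` (the empty set if `a` has no predecessor). -/
def brevePred (J : Set ℝ) (ks : Set ℝ) (Φ : Set (L2S J)) (a : ℝ) : Set (L2S J) :=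
  if {b ∈ ks | b < a}.Nonempty then suppSet J Φ (IccP ks a) else ∅

/-- `Φ_a := Φ_{[a₋,a₊]} \ Φ̆_{a₋}`. -/
def midAt (J : Set ℝ) (ks : Set ℝ) (Φ : Set (L2S J)) (a : ℝ) : Set (L2S J) :=
  suppSet J Φ (IccPS ks a) \ brevePred J ks Φ a

/-- `Φ̄_a := Φ_a \ Φ̆_a`. -/
def barAt (J : Set ℝ) (ks : Set ℝ) (Φ : Set (L2S J)) (a : ℝ) : Set (L2S J) :=
  midAt J ks Φ a \ breveAt J ks Φ a

open Classical in
/-- `Φ̄_{a₊}` (the empty set if `a` has no successor). -/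
def barSucc (J : Set ℝ) (ks : Set ℝ) (Φ : Set (L2S J)) (a : ℝ) : Set (L2S J) :=
  if {b ∈ ks | a < b}.Nonempty then barAt J ks Φ (succR ks a) else ∅

open Classical in
/-- Multiplication by the characteristic function of `I` (restriction to `I`). -/
def indL2 (J : Set ℝ) (I : Set ℝ) (f : L2S J) : L2S J :=
  if h : MeasurableSet I then ((Lp.memLp f).indicator h).toLp (I.indicator f) else 0

/-- `Φ` is a basis centered on the knot sequence `ks`. -/
def CenteredBasis (J ks : Set ℝ) (Φ : Set (L2S J)) : Prop :=
  LocFin J Φ ∧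
  Φ = ⋃ a ∈ ks, midAt J ks Φ a ∧
  ∀ a ∈ ks, LinearIndependent ℝ
    (fun φ : ↥(midAt J ks Φ a ∪ barSucc J ks Φ a) => indL2 J (IccS ks a) (φ : L2S J))

/-- `S(Φ)`: the `L²`-closure of the span of `Φ`. -/
def SClos (J : Set ℝ) (Φ : Set (L2S J)) : Submodule ℝ (L2S J) :=
  (Submodule.span ℝ Φ).topologicalClosure

/-- An orthogonal basis centered on `ks`. -/
def OrthoCenteredBasis (J ks : Set ℝ) (Φ : Set (L2S J)) : Prop :=
  CenteredBasis J ks Φ ∧ Φ.Pairwise fun f g => (inner ℝ f g : ℝ) = 0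

/-- The orthogonal projection onto the closure of a subspace, as a linear map. -/
def projL {H : Type*} [NormedAddCommGroup H] [InnerProductSpace ℝ H] [CompleteSpace H]
    (K : Submodule ℝ H) : H →ₗ[ℝ] H :=
  K.topologicalClosure.subtype ∘ₗ
    (Submodule.orthogonalProjectionOnto K.topologicalClosure : H →L[ℝ] K.topologicalClosure).toLinearMap

/-- The image `P_K U` of a subspace `U` under the orthogonal projection onto (the closure of)
`K`. -/
def projSub {H : Type*} [NormedAddCommGroup H] [InnerProductSpace ℝ H] [CompleteSpace H]
    (K U : Submodule ℝ H) : Submodule ℝ H :=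
  U.map (projL K)

/-- The image `(I − P_K) U`. -/
def oneSubProjSub {H : Type*} [NormedAddCommGroup H] [InnerProductSpace ℝ H] [CompleteSpace H]
    (K U : Submodule ℝ H) : Submodule ℝ H :=
  U.map (LinearMap.id - projL K)

/-- Two subspaces are orthogonal. -/
def PerpSub {H : Type*} [NormedAddCommGroup H] [InnerProductSpace ℝ H]
    (U V : Submodule ℝ H) : Prop :=
  ∀ f ∈ U, ∀ g ∈ V, (inner ℝ f g : ℝ) = 0

end KnotWavelet

namespace KnotWavelet

variable (J ks : Set ℝ)

open Classical in
/-- Multiplication by the characteristic function of `I`, as a linear map. -/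
def indLM (I : Set ℝ) : L2S J →ₗ[ℝ] L2S J where
  toFun := indL2 J I
  map_add' f g := by
    unfold indL2
    split_ifs with h
    · have hf := (Lp.memLp f).indicator h
      have hg := (Lp.memLp g).indicator h
      calc ((Lp.memLp (f + g)).indicator h).toLp (I.indicator ⇑(f + g))
          = (hf.add hg).toLp (I.indicator ⇑f + I.indicator ⇑g) := by
            refine MemLp.toLp_congr _ _ ?_
            filter_upwards [Lp.coeFn_add f g] with x hx
            by_cases hxI : x ∈ I
            · rw [Pi.add_apply, Set.indicator_of_mem hxI, Set.indicator_of_mem hxI,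
                Set.indicator_of_mem hxI]
              exact hx
            · rw [Pi.add_apply, Set.indicator_of_notMem hxI, Set.indicator_of_notMem hxI,
                Set.indicator_of_notMem hxI, add_zero]
        _ = hf.toLp (I.indicator ⇑f) + hg.toLp (I.indicator ⇑g) := MemLp.toLp_add hf hg
    · simp
  map_smul' c f := by
    unfold indL2
    split_ifs with h
    · have hf := (Lp.memLp f).indicator h
      calc ((Lp.memLp (c • f)).indicator h).toLp (I.indicator ⇑(c • f))
          = (hf.const_smul c).toLp (c • I.indicator ⇑f) := by
            refine MemLp.toLp_congr _ _ ?_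
            filter_upwards [Lp.coeFn_smul c f] with x hx
            by_cases hxI : x ∈ I
            · rw [Pi.smul_apply, Set.indicator_of_mem hxI, Set.indicator_of_mem hxI]
              exact hx
            · rw [Pi.smul_apply, Set.indicator_of_notMem hxI, Set.indicator_of_notMem hxI,
                smul_zero]
        _ = c • hf.toLp (I.indicator ⇑f) := MemLp.toLp_const_smul c hf
    · simp

/-- The image `χ_I · U` of a subspace under multiplication by the characteristic function of
`I`. -/
def chiMul (I : Set ℝ) (U : Submodule ℝ (L2S J)) : Submodule ℝ (L2S J) :=
  U.map (indLM J I)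

/-- `V_a`, the subspace of members of `V` supported in `[a₋, a₊]`. -/
def Vmid (V : Submodule ℝ (L2S J)) (a : ℝ) : Submodule ℝ (L2S J) :=
  suppSub J V (IccPS ks a)

/-- `V̆_a`, the subspace of members of `V` supported in `[a, a₊]`. -/
def Vbreve (V : Submodule ℝ (L2S J)) (a : ℝ) : Submodule ℝ (L2S J) :=
  suppSub J V (IccS ks a)

open Classical in
/-- `V̆_{a₋}` (the zero subspace if `a` has no predecessor in `ks`). -/
def VbrevePred (V : Submodule ℝ (L2S J)) (a : ℝ) : Submodule ℝ (L2S J) :=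
  if {b ∈ ks | b < a}.Nonempty then suppSub J V (IccP ks a) else ⊥

/-- `V̄_a := (I − P_{V̆_{a₋} ⊕ V̆_a}) V_a`. -/
def Vbar (V : Submodule ℝ (L2S J)) (a : ℝ) : Submodule ℝ (L2S J) :=
  oneSubProjSub (VbrevePred J ks V a ⊔ Vbreve J ks V a) (Vmid J ks V a)

/-- `A_a⁺ := P_{V̆¹_a} V̄⁰_a`. -/
def Aplus (V₀ V₁ : Submodule ℝ (L2S J)) (a : ℝ) : Submodule ℝ (L2S J) :=
  projSub (Vbreve J ks V₁ a) (Vbar J ks V₀ a)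

/-- `A_a⁻ := P_{V̆¹_{a₋}} V̄⁰_a`. -/
def Aminus (V₀ V₁ : Submodule ℝ (L2S J)) (a : ℝ) : Submodule ℝ (L2S J) :=
  projSub (VbrevePred J ks V₁ a) (Vbar J ks V₀ a)

/-- The wavelet space `W := V¹ ⊖ V⁰`, the orthogonal complement of `V⁰` in `V¹`. -/
def Wsp (V₀ V₁ : Submodule ℝ (L2S J)) : Submodule ℝ (L2S J) :=
  V₁ ⊓ V₀ᗮ

/-- `W̄_a := W_a ⊖ (W̆_{a₋} ⊕ W̆_a)`. -/
def Wbar (V₀ V₁ : Submodule ℝ (L2S J)) (a : ℝ) : Submodule ℝ (L2S J) :=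
  Vmid J ks (Wsp J V₀ V₁) a ⊓
    (VbrevePred J ks (Wsp J V₀ V₁) a ⊔ Vbreve J ks (Wsp J V₀ V₁) a)ᗮ

/-- `Y_a := V̄⁰_a ∩ V̄¹_a`. -/
def Ysp (V₀ V₁ : Submodule ℝ (L2S J)) (a : ℝ) : Submodule ℝ (L2S J) :=
  Vbar J ks V₀ a ⊓ Vbar J ks V₁ a

/-- `Y_a⁺ := (χ_{[a,a₊]}·V̄⁰_a) ∩ (χ_{[a,a₊]}·V̄¹_a)`. -/
def Yplus (V₀ V₁ : Submodule ℝ (L2S J)) (a : ℝ) : Submodule ℝ (L2S J) :=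
  chiMul J (IccS ks a) (Vbar J ks V₀ a) ⊓ chiMul J (IccS ks a) (Vbar J ks V₁ a)

/-- `Y_a⁻ := (χ_{[a₋,a]}·V̄⁰_a) ∩ (χ_{[a₋,a]}·V̄¹_a)`. -/
def Yminus (V₀ V₁ : Submodule ℝ (L2S J)) (a : ℝ) : Submodule ℝ (L2S J) :=
  chiMul J (IccP ks a) (Vbar J ks V₀ a) ⊓ chiMul J (IccP ks a) (Vbar J ks V₁ a)

/-- `X_a⁺ := (χ_{[a,a₊]}·V̄⁰_a) ⊖ Y_a⁺`. -/
def Xplus (V₀ V₁ : Submodule ℝ (L2S J)) (a : ℝ) : Submodule ℝ (L2S J) :=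
  chiMul J (IccS ks a) (Vbar J ks V₀ a) ⊓ (Yplus J ks V₀ V₁ a)ᗮ

/-- `X_a⁻ := (χ_{[a₋,a]}·V̄⁰_a) ⊖ Y_a⁻`. -/
def Xminus (V₀ V₁ : Submodule ℝ (L2S J)) (a : ℝ) : Submodule ℝ (L2S J) :=
  chiMul J (IccP ks a) (Vbar J ks V₀ a) ⊓ (Yminus J ks V₀ V₁ a)ᗮ

/-- `T_a := (I − P_{V̄¹_a}) V̄⁰_a`. -/
def Tsp (V₀ V₁ : Submodule ℝ (L2S J)) (a : ℝ) : Submodule ℝ (L2S J) :=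
  oneSubProjSub (Vbar J ks V₁ a) (Vbar J ks V₀ a)

/-- `T_a⁻ := {f ∈ T_a : supp f ⊆ [a₋,a]}`. -/
def Tminus (V₀ V₁ : Submodule ℝ (L2S J)) (a : ℝ) : Submodule ℝ (L2S J) :=
  suppSub J (Tsp J ks V₀ V₁ a) (IccP ks a)

/-- `T_a⁺ := {f ∈ T_a : supp f ⊆ [a,a₊]}`. -/
def Tplus (V₀ V₁ : Submodule ℝ (L2S J)) (a : ℝ) : Submodule ℝ (L2S J) :=
  suppSub J (Tsp J ks V₀ V₁ a) (IccS ks a)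

/-- `U_a := T_a ⊖ (T_a⁻ ⊕ T_a⁺)`. -/
def Usp (V₀ V₁ : Submodule ℝ (L2S J)) (a : ℝ) : Submodule ℝ (L2S J) :=
  Tsp J ks V₀ V₁ a ⊓ (Tminus J ks V₀ V₁ a ⊔ Tplus J ks V₀ V₁ a)ᗮ

/-- `S_a := (χ_{[a,a₊]} − χ_{[a₋,a]})·U_a`. -/
def Ssp (V₀ V₁ : Submodule ℝ (L2S J)) (a : ℝ) : Submodule ℝ (L2S J) :=
  (Usp J ks V₀ V₁ a).map (indLM J (IccS ks a) - indLM J (IccP ks a))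

/-- `Ŵ_a := (I − P_{V̄⁰_a}) V̄¹_a`. -/
def What (V₀ V₁ : Submodule ℝ (L2S J)) (a : ℝ) : Submodule ℝ (L2S J) :=
  oneSubProjSub (Vbar J ks V₀ a) (Vbar J ks V₁ a)

/-- `W̃_a := W̄_a ⊖ Ŵ_a`. -/
def Wtilde (V₀ V₁ : Submodule ℝ (L2S J)) (a : ℝ) : Submodule ℝ (L2S J) :=
  Wbar J ks V₀ V₁ a ⊓ (What J ks V₀ V₁ a)ᗮ

end KnotWavelet
namespace KWAux
open KnotWavelet MeasureTheory Set

set_option synthInstance.maxHeartbeats 1000000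
set_option maxHeartbeats 1000000

variable {J : Set ℝ}

local notation "μJ" => volume.restrict J

/-- Real inner product of two `L²(J)` elements vanishes if the product vanishes a.e. -/
lemma inner_zero_of_ae {f g : L2S J}
    (h : ∀ᵐ x ∂(volume.restrict J), (f : ℝ → ℝ) x * g x = 0) : (inner ℝ f g : ℝ) = 0 := by
  rw [MeasureTheory.L2.inner_def]
  rw [show (0:ℝ) = ∫ x, (0:ℝ) ∂(volume.restrict J) by simp]
  refine integral_congr_ae ?_
  filter_upwards [h] with x hx
  simpa [RCLike.inner_apply, starRingEnd_apply, or_comm] using hx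

lemma suppIn_mono {f : L2S J} {X Y : Set ℝ} (hXY : X ⊆ Y) (h : SuppIn J f X) :
    SuppIn J f Y := by
  filter_upwards [h] with x hx hxY
  exact hx (fun hxX => hxY (hXY hxX))

lemma suppIn_inter {f : L2S J} {X Y : Set ℝ} (hX : SuppIn J f X) (hY : SuppIn J f Y) :
    SuppIn J f (X ∩ Y) := by
  filter_upwards [hX, hY] with x h1 h2 hxi
  by_cases hx : x ∈ X
  · exact h2 (fun hy => hxi ⟨hx, hy⟩)
  · exact h1 hx

/-- Inner product vanishes for a.e.-disjointly supported functions. -/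
lemma inner_zero_of_disj {f g : L2S J} {X Y : Set ℝ}
    (hf : SuppIn J f X) (hg : SuppIn J g Y)
    (hnull : (volume.restrict J) (X ∩ Y) = 0) : (inner ℝ f g : ℝ) = 0 := by
  refine inner_zero_of_ae ?_
  have h3 : ∀ᵐ x ∂(volume.restrict J), x ∉ X ∩ Y := by
    rw [ae_iff]; simpa using hnull
  filter_upwards [hf, hg, h3] with x h1 h2 h4
  by_cases hx : x ∈ X
  · rw [h2 (fun hy => h4 ⟨hx, hy⟩), mul_zero]
  · rw [h1 hx, zero_mul]

lemma null_of_subset_singleton {S : Set ℝ} {r : ℝ} (h : S ⊆ {r}) :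
    (volume.restrict J) S = 0 := by
  refine measure_mono_null h ?_
  rw [Measure.restrict_apply (measurableSet_singleton r)]
  exact measure_mono_null Set.inter_subset_left Real.volume_singleton

/-- The submodule of all of `L²(J)` supported in `X`. -/
def suppM (J X : Set ℝ) : Submodule ℝ (L2S J) := suppSub J ⊤ X

lemma mem_suppM {f : L2S J} {X : Set ℝ} : f ∈ suppM J X ↔ SuppIn J f X :=
  ⟨fun h => h.2, fun h => ⟨trivial, h⟩⟩

lemma mem_suppSub {V : Submodule ℝ (L2S J)} {f : L2S J} {X : Set ℝ} :
    f ∈ suppSub J V X ↔ f ∈ V ∧ SuppIn J f X := Iff.rfl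

/-- `indLM` is norm-nonincreasing. -/
lemma norm_indLM_le (Y : Set ℝ) (f : L2S J) : ‖indLM J Y f‖ ≤ ‖f‖ := by
  show ‖indL2 J Y f‖ ≤ ‖f‖
  unfold indL2
  split_ifs with h
  · rw [Lp.norm_toLp]
    rw [Lp.norm_def]
    refine ENNReal.toReal_mono (Lp.eLpNorm_ne_top f) ?_
    exact eLpNorm_indicator_le _
  · simpa using norm_nonneg f

/-- `indLM` as a continuous linear map. -/
noncomputable def indCLM (J Y : Set ℝ) : L2S J →L[ℝ] L2S J :=
  LinearMap.mkContinuous (indLM J Y) 1 (fun f => by simpa using norm_indLM_le Y f)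

lemma suppIn_iff_indCLM {X : Set ℝ} (hX : MeasurableSet X) (f : L2S J) :
    SuppIn J f X ↔ indCLM J Xᶜ f = 0 := by
  have hXc : MeasurableSet Xᶜ := hX.compl
  have hval : indCLM J Xᶜ f = ((Lp.memLp f).indicator hXc).toLp (Xᶜ.indicator f) := by
    show indL2 J Xᶜ f = _
    rw [indL2, dif_pos hXc]
  constructor
  · intro h
    rw [hval]
    have h0 : Xᶜ.indicator (f : ℝ → ℝ) =ᵐ[volume.restrict J] (0 : ℝ → ℝ) := by
      filter_upwards [h] with x hx
      by_cases hxX : x ∈ X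
      · simp [Set.indicator_of_notMem (Set.notMem_compl_iff.mpr hxX)]
      · simp [Set.indicator_of_mem (Set.mem_compl hxX), hx hxX]
    rw [← MemLp.toLp_zero (MemLp.zero : MemLp (0 : ℝ → ℝ) 2 (volume.restrict J))]
    exact MemLp.toLp_congr _ _ h0
  · intro h
    have h1 : ⇑(indCLM J Xᶜ f) =ᵐ[volume.restrict J] Xᶜ.indicator f := by
      rw [hval]; exact MemLp.coeFn_toLp _
    have h2 : ⇑(indCLM J Xᶜ f) =ᵐ[volume.restrict J] (0 : ℝ → ℝ) := by
      rw [h]; exact Lp.coeFn_zero _ _ _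
    filter_upwards [h1.symm.trans h2] with x hx hxX
    have := hx
    rwa [Set.indicator_of_mem (Set.mem_compl hxX)] at this

lemma isClosed_suppM {X : Set ℝ} (hX : MeasurableSet X) :
    IsClosed ((suppM J X : Submodule ℝ (L2S J)) : Set (L2S J)) := by
  have : ((suppM J X : Submodule ℝ (L2S J)) : Set (L2S J)) = (indCLM J Xᶜ) ⁻¹' {0} := by
    ext f
    simp only [SetLike.mem_coe, mem_suppM, Set.mem_preimage, Set.mem_singleton_iff]
    exact suppIn_iff_indCLM hX f
  rw [this]
  exact isClosed_singleton.preimage (indCLM J Xᶜ).continuous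

/-- Membership in topological closure preserves orthogonality. -/
lemma inner_zero_of_mem_closure {v u : L2S J} {K : Submodule ℝ (L2S J)}
    (h : ∀ w ∈ K, (inner ℝ v w : ℝ) = 0) (hu : u ∈ K.topologicalClosure) :
    (inner ℝ v u : ℝ) = 0 := by
  have hker : K ≤ LinearMap.ker (innerSL ℝ v : L2S J →L[ℝ] ℝ).toLinearMap := by
    intro w hw
    simpa [LinearMap.mem_ker] using h w hw
  have hcl : IsClosed ((LinearMap.ker (innerSL ℝ v : L2S J →L[ℝ] ℝ).toLinearMap :
      Submodule ℝ (L2S J)) : Set (L2S J)) := by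
    have : ((LinearMap.ker (innerSL ℝ v : L2S J →L[ℝ] ℝ).toLinearMap :
        Submodule ℝ (L2S J)) : Set (L2S J)) = (innerSL ℝ v : L2S J →L[ℝ] ℝ) ⁻¹' {0} := by
      ext w; simp [LinearMap.mem_ker]
    rw [this]
    exact isClosed_singleton.preimage (innerSL ℝ v).continuous
  have := Submodule.topologicalClosure_minimal K hker hcl hu
  simpa [LinearMap.mem_ker] using this

lemma inner_zero_of_mem_closure' {v u : L2S J} {K : Submodule ℝ (L2S J)}
    (h : ∀ w ∈ K, (inner ℝ w v : ℝ) = 0) (hu : u ∈ K.topologicalClosure) :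
    (inner ℝ u v : ℝ) = 0 := by
  rw [real_inner_comm]
  exact inner_zero_of_mem_closure (fun w hw => by rw [real_inner_comm]; exact h w hw) hu

/-- Orthogonality to a set extends to the closed span. -/
lemma inner_zero_of_mem_sclos {v u : L2S J} {S : Set (L2S J)}
    (h : ∀ φ ∈ S, (inner ℝ v φ : ℝ) = 0) (hu : u ∈ SClos J S) :
    (inner ℝ v u : ℝ) = 0 := by
  refine inner_zero_of_mem_closure ?_ hu
  intro w hw
  induction hw using Submodule.span_induction with
  | mem x hx => exact h x hx
  | zero => simp
  | add x y _ _ hx hy => rw [inner_add_right, hx, hy, add_zero]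
  | smul c x _ hx => rw [inner_smul_right, hx, mul_zero]

/-- Elements of the closed span of functions supported in `X` are supported in `X`. -/
lemma suppIn_of_mem_closure {u : L2S J} {K : Submodule ℝ (L2S J)} {X : Set ℝ}
    (hX : MeasurableSet X) (hK : K ≤ suppM J X) (hu : u ∈ K.topologicalClosure) :
    SuppIn J u X :=
  mem_suppM.mp (Submodule.topologicalClosure_minimal K hK (isClosed_suppM hX) hu)


section OrderFacts

variable {ks : Set ℝ}

lemma predE_le_coe {a : ℝ} : predE ks a ≤ (a : EReal) := by
  refine sSup_le ?_
  rintro _ ⟨b, ⟨_, hba⟩, rfl⟩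
  show (b : EReal) ≤ (a : EReal)
  exact_mod_cast hba.le

lemma coe_le_succE {a : ℝ} : (a : EReal) ≤ succE ks a := by
  refine le_sInf ?_
  rintro _ ⟨b, ⟨_, hab⟩, rfl⟩
  show (a : EReal) ≤ (b : EReal)
  exact_mod_cast hab.le

lemma IccP_subset_IccPS {a : ℝ} : IccP ks a ⊆ IccPS ks a := by
  rintro z ⟨h1, h2⟩
  exact ⟨h1, le_trans (by exact_mod_cast h2) coe_le_succE⟩

lemma IccS_subset_IccPS {a : ℝ} : IccS ks a ⊆ IccPS ks a := by
  rintro z ⟨h1, h2⟩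
  exact ⟨le_trans predE_le_coe (by exact_mod_cast h1), h2⟩

lemma measurableSet_coe_ge (e : EReal) : MeasurableSet {z : ℝ | e ≤ (z : EReal)} := by
  induction e using EReal.rec with
  | bot => simp only [bot_le, Set.setOf_true]; exact MeasurableSet.univ
  | coe r =>
      have : {z : ℝ | (r : EReal) ≤ (z : EReal)} = Set.Ici r := by
        ext z; simp [EReal.coe_le_coe_iff]
      rw [this]; exact measurableSet_Ici
  | top =>
      have : {z : ℝ | (⊤ : EReal) ≤ (z : EReal)} = ∅ := by
        ext z
        simp only [Set.mem_setOf_eq, top_le_iff, Set.mem_empty_iff_false, iff_false]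
        exact fun h => (EReal.coe_lt_top z).ne h
      rw [this]; exact MeasurableSet.empty

lemma measurableSet_coe_le (e : EReal) : MeasurableSet {z : ℝ | (z : EReal) ≤ e} := by
  induction e using EReal.rec with
  | bot =>
      have : {z : ℝ | (z : EReal) ≤ (⊥ : EReal)} = ∅ := by
        ext z
        simp only [Set.mem_setOf_eq, le_bot_iff, Set.mem_empty_iff_false, iff_false]
        exact fun h => (EReal.bot_lt_coe z).ne' h
      rw [this]; exact MeasurableSet.empty
  | coe r =>
      have : {z : ℝ | (z : EReal) ≤ (r : EReal)} = Set.Iic r := by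
        ext z; simp [EReal.coe_le_coe_iff]
      rw [this]; exact measurableSet_Iic
  | top => simp only [le_top, Set.setOf_true]; exact MeasurableSet.univ

lemma measurableSet_IccPS (a : ℝ) : MeasurableSet (IccPS ks a) := by
  have : IccPS ks a = {z : ℝ | predE ks a ≤ (z : EReal)} ∩ {z : ℝ | (z : EReal) ≤ succE ks a} :=
    rfl
  rw [this]
  exact (measurableSet_coe_ge _).inter (measurableSet_coe_le _)

/-- Adjacency facts when `c < a` and the windows of `c` and `a` overlap. -/
lemma adj_facts {c a : ℝ} (hc : c ∈ ks) (ha : a ∈ ks) (hca : c < a)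
    (hno : ¬ succE ks c ≤ predE ks a) :
    predE ks a = (c : EReal) ∧ succE ks c = (a : EReal) := by
  have hmid : ∀ b ∈ ks, ¬ (c < b ∧ b < a) := by
    rintro b hb ⟨h1, h2⟩
    exact hno (le_trans (sInf_le ⟨b, ⟨hb, h1⟩, rfl⟩) (le_sSup ⟨b, ⟨hb, h2⟩, rfl⟩))
  constructor
  · refine le_antisymm (sSup_le ?_) (le_sSup ⟨c, ⟨hc, hca⟩, rfl⟩)
    rintro _ ⟨b, ⟨hb, hba⟩, rfl⟩
    refine EReal.coe_le_coe_iff.mpr ?_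
    by_contra h
    exact hmid b hb ⟨lt_of_not_ge h, hba⟩
  · refine le_antisymm (sInf_le ⟨a, ⟨ha, hca⟩, rfl⟩) (le_sInf ?_)
    rintro _ ⟨b, ⟨hb, hcb⟩, rfl⟩
    refine EReal.coe_le_coe_iff.mpr ?_
    by_contra h
    exact hmid b hb ⟨hcb, lt_of_not_ge h⟩

end OrderFacts

section Phi

variable {J ks : Set ℝ}

lemma mem_Phi_of_midAt {Φ : Set (L2S J)} {c : ℝ} {φ : L2S J}
    (h : φ ∈ midAt J ks Φ c) : φ ∈ Φ := h.1.1

lemma suppIn_of_midAt {Φ : Set (L2S J)} {c : ℝ} {φ : L2S J}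
    (h : φ ∈ midAt J ks Φ c) : SuppIn J φ (IccPS ks c) := h.1.2

lemma mem_SClos_of_mem {Φ : Set (L2S J)} {φ : L2S J} (h : φ ∈ Φ) : φ ∈ SClos J Φ :=
  Submodule.le_topologicalClosure _ (Submodule.subset_span h)

/-- Core finite-dimensionality lemma: an element of the closed span of a locally finite
orthogonal family that is supported in a set whose trace on `J` lies in a compact `K ⊆ J`
belongs to the span of the finitely many members not vanishing on `K`. -/
lemma mem_span_of_suppIn (hJm : MeasurableSet J) {Φ : Set (L2S J)}
    (horth : Φ.Pairwise (fun f g => (inner ℝ f g : ℝ) = 0)) (hloc : LocFin J Φ)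
    {K : Set ℝ} (hKJ : K ⊆ J) (hKc : IsCompact K) {X : Set ℝ} (hXK : X ∩ J ⊆ K)
    {f : L2S J} (hf : f ∈ SClos J Φ) (hsupp : SuppIn J f X) :
    f ∈ Submodule.span ℝ
      {φ ∈ Φ | ¬ ∀ᵐ x ∂(volume.restrict J), x ∈ K → (φ : ℝ → ℝ) x = 0} := by
  set N := {φ ∈ Φ | ¬ ∀ᵐ x ∂(volume.restrict J), x ∈ K → (φ : ℝ → ℝ) x = 0} with hNdef
  have hN : N.Finite := hloc K hKc hKJ
  haveI : FiniteDimensional ℝ (Submodule.span ℝ N) := FiniteDimensional.span_of_finite ℝ hN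
  set E := Submodule.span ℝ N with hEdef
  have hEV : E ≤ SClos J Φ :=
    le_trans (Submodule.span_mono (fun φ hφ => hφ.1)) (Submodule.le_topologicalClosure _)
  set g := f - (Submodule.orthogonalProjectionOnto E f : L2S J) with hgdef
  have hgV : g ∈ SClos J Φ := sub_mem hf (hEV (SetLike.coe_mem _))
  have hperp : ∀ φ ∈ Φ, (inner ℝ g φ : ℝ) = 0 := by
    intro φ hφ
    by_cases hφN : φ ∈ N
    · have hgo : g ∈ Eᗮ := Submodule.sub_starProjection_mem_orthogonal f
      exact (Submodule.mem_orthogonal' E g).mp hgo φ (Submodule.subset_span hφN)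
    · have hvan : ∀ᵐ x ∂(volume.restrict J), x ∈ K → (φ : ℝ → ℝ) x = 0 :=
        not_not.mp (fun hcon => hφN ⟨hφ, hcon⟩)
      have h1 : (inner ℝ f φ : ℝ) = 0 := by
        refine inner_zero_of_ae ?_
        filter_upwards [hsupp, hvan, ae_restrict_mem hJm] with x hx1 hx2 hxJ
        by_cases hxX : x ∈ X
        · rw [hx2 (hXK ⟨hxX, hxJ⟩), mul_zero]
        · rw [hx1 hxX, zero_mul]
      have h2' : ∀ u ∈ E, (inner ℝ u φ : ℝ) = 0 := by
        intro u hu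
        induction hu using Submodule.span_induction with
        | mem ψ hψ => exact horth hψ.1 hφ (fun he => hφN (he ▸ hψ))
        | zero => simp
        | add u v _ _ hu hv => rw [inner_add_left, hu, hv, add_zero]
        | smul c u _ hu => rw [real_inner_smul_left, hu, mul_zero]
      have h2 : (inner ℝ ((Submodule.orthogonalProjectionOnto E f : L2S J)) φ : ℝ) = 0 :=
        h2' _ (SetLike.coe_mem _)
      rw [hgdef, inner_sub_left, h1, h2, sub_zero]
  have hzero : (inner ℝ g g : ℝ) = 0 := inner_zero_of_mem_sclos hperp hgV
  have hg0 : g = 0 := inner_self_eq_zero.mp hzero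
  have hfeq : f = ((Submodule.orthogonalProjectionOnto E f : L2S J)) := by
    rw [hgdef] at hg0
    exact sub_eq_zero.mp hg0
  rw [hfeq]
  exact SetLike.coe_mem _

/-- Existence of a compact subinterval of `J` containing `[a₋,a₊] ∩ J`. -/
lemma exists_compact_window (hJ : J.OrdConnected) (hks : IsKnotSeq J ks) {a : ℝ}
    (ha : a ∈ ks) : ∃ K : Set ℝ, K ⊆ J ∧ IsCompact K ∧ IccPS ks a ∩ J ⊆ K := by
  have hsub := hks.subset
  have hleft : ∃ l, l ∈ J ∧ ∀ x ∈ IccPS ks a ∩ J, l ≤ x := by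
    by_cases hp : {b ∈ ks | b < a}.Nonempty
    · obtain ⟨b₀, hb₀, hb₀a⟩ := hp
      have h1 : (b₀ : EReal) ≤ predE ks a := le_sSup ⟨b₀, ⟨hb₀, hb₀a⟩, rfl⟩
      have h2 : predE ks a ≤ (a : EReal) := predE_le_coe
      set l := (predE ks a).toReal with hldef
      have hcoe : (l : EReal) = predE ks a :=
        EReal.coe_toReal (h2.trans_lt (EReal.coe_lt_top a)).ne
          ((EReal.bot_lt_coe b₀).trans_le h1).ne'
      refine ⟨l, hJ.out (hsub hb₀) (hsub ha)
        ⟨EReal.coe_le_coe_iff.mp (hcoe ▸ h1), EReal.coe_le_coe_iff.mp (hcoe ▸ h2)⟩, ?_⟩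
      rintro x ⟨⟨hx1, _⟩, _⟩
      exact EReal.coe_le_coe_iff.mp (hcoe ▸ hx1)
    · have hinf : sInf ((fun x : ℝ => (x : EReal)) '' J) = (a : EReal) := by
        rw [← hks.inf_eq]
        refine le_antisymm (sInf_le ⟨a, ha, rfl⟩) (le_sInf ?_)
        rintro _ ⟨b, hb, rfl⟩
        exact EReal.coe_le_coe_iff.mpr (le_of_not_gt (fun h => hp ⟨b, hb, h⟩))
      refine ⟨a, hsub ha, ?_⟩
      rintro x ⟨_, hxJ⟩
      have : (a : EReal) ≤ (x : EReal) := hinf ▸ sInf_le ⟨x, hxJ, rfl⟩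
      exact_mod_cast this
  have hright : ∃ r, r ∈ J ∧ ∀ x ∈ IccPS ks a ∩ J, x ≤ r := by
    by_cases hp : {b ∈ ks | a < b}.Nonempty
    · obtain ⟨b₀, hb₀, hab₀⟩ := hp
      have h1 : succE ks a ≤ (b₀ : EReal) := sInf_le ⟨b₀, ⟨hb₀, hab₀⟩, rfl⟩
      have h2 : (a : EReal) ≤ succE ks a := coe_le_succE
      set r := (succE ks a).toReal with hrdef
      have hcoe : (r : EReal) = succE ks a :=
        EReal.coe_toReal (h1.trans_lt (EReal.coe_lt_top b₀)).ne
          ((EReal.bot_lt_coe a).trans_le h2).ne'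
      refine ⟨r, hJ.out (hsub ha) (hsub hb₀)
        ⟨EReal.coe_le_coe_iff.mp (hcoe ▸ h2), EReal.coe_le_coe_iff.mp (hcoe ▸ h1)⟩, ?_⟩
      rintro x ⟨⟨_, hx2⟩, _⟩
      exact EReal.coe_le_coe_iff.mp (hcoe ▸ hx2)
    · have hsup : sSup ((fun x : ℝ => (x : EReal)) '' J) = (a : EReal) := by
        rw [← hks.sup_eq]
        refine le_antisymm (sSup_le ?_) (le_sSup ⟨a, ha, rfl⟩)
        rintro _ ⟨b, hb, rfl⟩
        exact EReal.coe_le_coe_iff.mpr (le_of_not_gt (fun h => hp ⟨b, hb, h⟩))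
      refine ⟨a, hsub ha, ?_⟩
      rintro x ⟨_, hxJ⟩
      have : (x : EReal) ≤ (a : EReal) := hsup ▸ le_sSup ⟨x, hxJ, rfl⟩
      exact_mod_cast this
  obtain ⟨l, hlJ, hl⟩ := hleft
  obtain ⟨r, hrJ, hr⟩ := hright
  exact ⟨Set.Icc l r, hJ.out hlJ hrJ, isCompact_Icc, fun x hx => ⟨hl x hx, hr x hx⟩⟩

/-- `V_a` is finite dimensional. -/
lemma finiteDimensional_Vmid (hJ : J.OrdConnected) (hks : IsKnotSeq J ks)
    {Φ : Set (L2S J)} (horth : Φ.Pairwise (fun f g => (inner ℝ f g : ℝ) = 0))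
    (hloc : LocFin J Φ) {V : Submodule ℝ (L2S J)} (hV : V = SClos J Φ) {a : ℝ}
    (ha : a ∈ ks) : FiniteDimensional ℝ ↥(Vmid J ks V a) := by
  obtain ⟨K, hKJ, hKc, hXK⟩ := exists_compact_window hJ hks ha
  have hN : Set.Finite {φ ∈ Φ | ¬ ∀ᵐ x ∂(volume.restrict J), x ∈ K → (φ : ℝ → ℝ) x = 0} :=
    hloc K hKc hKJ
  haveI : FiniteDimensional ℝ
      (Submodule.span ℝ {φ ∈ Φ | ¬ ∀ᵐ x ∂(volume.restrict J), x ∈ K → (φ : ℝ → ℝ) x = 0}) :=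
    FiniteDimensional.span_of_finite ℝ hN
  refine Submodule.finiteDimensional_of_le (S₂ := Submodule.span ℝ
    {φ ∈ Φ | ¬ ∀ᵐ x ∂(volume.restrict J), x ∈ K → (φ : ℝ → ℝ) x = 0}) ?_
  intro f hf
  exact mem_span_of_suppIn hJ.measurableSet horth hloc hKJ hKc hXK (hV ▸ hf.1) hf.2

end Phi

section Cross

variable {J ks : Set ℝ}

/-- Orthogonality across a knot: if `p < q` are adjacent knots, `v ∈ V` is supported in
`[p,∞)` and orthogonal to all members of `V` supported in `[p,q]`, then `v` is orthogonal
to every member of `V` supported in `(-∞,q]`. -/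
lemma cross (hJm : MeasurableSet J) {Φ : Set (L2S J)}
    (horth : Φ.Pairwise (fun f g => (inner ℝ f g : ℝ) = 0))
    (hcov : Φ = ⋃ c ∈ ks, midAt J ks Φ c)
    {V : Submodule ℝ (L2S J)} (hV : V = SClos J Φ)
    {p q : ℝ} (hp : p ∈ ks) (hq : q ∈ ks) (hpq : p < q)
    (htri : ∀ b ∈ ks, b ≤ p ∨ q ≤ b)
    {v y : L2S J} (hv : v ∈ V) (hvs : SuppIn J v (Set.Ici p))
    (hvperp : ∀ u ∈ V, SuppIn J u (Set.Icc p q) → (inner ℝ v u : ℝ) = 0)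
    (hy : y ∈ V) (hys : SuppIn J y (Set.Iic q)) : (inner ℝ v y : ℝ) = 0 := by
  classical
  set Φle := {φ | φ ∈ Φ ∧ ∃ c ∈ ks, c ≤ p ∧ φ ∈ midAt J ks Φ c} with hΦledef
  set Φge := Φ \ Φle with hΦgedef
  have hsuble : ∀ φ ∈ Φle, SuppIn J φ (Set.Iic q) := by
    rintro φ ⟨hφΦ, c, hc, hcp, hmid⟩
    refine suppIn_mono ?_ (suppIn_of_midAt hmid)
    rintro z ⟨_, h2⟩
    have hcq : succE ks c ≤ (q : EReal) := sInf_le ⟨q, ⟨hq, lt_of_le_of_lt hcp hpq⟩, rfl⟩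
    exact EReal.coe_le_coe_iff.mp (h2.trans hcq)
  have hsubge : ∀ φ ∈ Φge, SuppIn J φ (Set.Ici p) := by
    rintro φ ⟨hφΦ, hφn⟩
    have hφΦ' := hφΦ
    rw [hcov] at hφΦ'
    simp only [Set.mem_iUnion] at hφΦ'
    obtain ⟨c, hc, hmid⟩ := hφΦ'
    have hcq : q ≤ c := by
      rcases htri c hc with h | h
      · exact absurd ⟨hφΦ, c, hc, h, hmid⟩ hφn
      · exact h
    refine suppIn_mono ?_ (suppIn_of_midAt hmid)
    rintro z ⟨h1, _⟩
    have hpc : (p : EReal) ≤ predE ks c :=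
      le_sSup ⟨p, ⟨hp, lt_of_lt_of_le hpq hcq⟩, rfl⟩
    exact EReal.coe_le_coe_iff.mp (hpc.trans h1)
  set Cle := (Submodule.span ℝ Φle).topologicalClosure with hCledef
  set Cge := (Submodule.span ℝ Φge).topologicalClosure with hCgedef
  have hCleV : Cle ≤ V := by
    rw [hV]
    exact Submodule.topologicalClosure_mono (Submodule.span_mono (fun φ h => h.1))
  have hCgeV : Cge ≤ V := by
    rw [hV]
    exact Submodule.topologicalClosure_mono (Submodule.span_mono (fun φ h => h.1))
  have hCle_supp : ∀ u ∈ Cle, SuppIn J u (Set.Iic q) := by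
    intro u hu
    refine suppIn_of_mem_closure measurableSet_Iic ?_ hu
    rw [Submodule.span_le]
    exact fun φ h => mem_suppM.mpr (hsuble φ h)
  have hCge_supp : ∀ u ∈ Cge, SuppIn J u (Set.Ici p) := by
    intro u hu
    refine suppIn_of_mem_closure measurableSet_Ici ?_ hu
    rw [Submodule.span_le]
    exact fun φ h => mem_suppM.mpr (hsubge φ h)
  have hmutφ : ∀ φ ∈ Φle, ∀ w ∈ Cge, (inner ℝ φ w : ℝ) = 0 := by
    intro φ hφ w hw
    refine inner_zero_of_mem_closure ?_ hw
    intro z hz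
    induction hz using Submodule.span_induction with
    | mem ψ hψ => exact horth hφ.1 hψ.1 (fun he => hψ.2 (he ▸ hφ))
    | zero => simp
    | add a b _ _ ha hb => rw [inner_add_right, ha, hb, add_zero]
    | smul c a _ ha => rw [real_inner_smul_right, ha, mul_zero]
  have hmut : ∀ u ∈ Cle, ∀ w ∈ Cge, (inner ℝ u w : ℝ) = 0 := by
    intro u hu w hw
    refine inner_zero_of_mem_closure' ?_ hu
    intro z hz
    induction hz using Submodule.span_induction with
    | mem ψ hψ => exact hmutφ ψ hψ w hw
    | zero => simp
    | add a b _ _ ha hb => rw [inner_add_left, ha, hb, add_zero]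
    | smul c a _ ha => rw [real_inner_smul_left, ha, mul_zero]
  have hmemCle : ∀ u ∈ V, (∀ φ ∈ Φge, (inner ℝ u φ : ℝ) = 0) → u ∈ Cle := by
    intro u huV hperp
    set w := u - (Submodule.orthogonalProjectionOnto Cle u : L2S J) with hwdef
    have hwperp : ∀ φ ∈ Φ, (inner ℝ w φ : ℝ) = 0 := by
      intro φ hφ
      by_cases hφle : φ ∈ Φle
      · have hwo : w ∈ Cleᗮ := Submodule.sub_starProjection_mem_orthogonal u
        exact (Submodule.mem_orthogonal' Cle w).mp hwo φ
          (Submodule.le_topologicalClosure _ (Submodule.subset_span hφle))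
      · have hφge : φ ∈ Φge := ⟨hφ, hφle⟩
        rw [hwdef, inner_sub_left, hperp φ hφge,
          hmut _ (SetLike.coe_mem _) φ
            (Submodule.le_topologicalClosure _ (Submodule.subset_span hφge)), sub_zero]
    have hwV : w ∈ V := sub_mem huV (hCleV (SetLike.coe_mem _))
    have hww : (inner ℝ w w : ℝ) = 0 := inner_zero_of_mem_sclos hwperp (hV ▸ hwV)
    have hw0 : w = 0 := inner_self_eq_zero.mp hww
    have : u = (Submodule.orthogonalProjectionOnto Cle u : L2S J) := by
      rw [hwdef] at hw0; exact sub_eq_zero.mp hw0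
    rw [this]; exact SetLike.coe_mem _
  have hmemCge : ∀ u ∈ V, (∀ φ ∈ Φle, (inner ℝ u φ : ℝ) = 0) → u ∈ Cge := by
    intro u huV hperp
    set w := u - (Submodule.orthogonalProjectionOnto Cge u : L2S J) with hwdef
    have hwperp : ∀ φ ∈ Φ, (inner ℝ w φ : ℝ) = 0 := by
      intro φ hφ
      by_cases hφle : φ ∈ Φle
      · rw [hwdef, inner_sub_left, hperp φ hφle]
        rw [real_inner_comm]
        rw [hmutφ φ hφle _ (SetLike.coe_mem _), sub_zero]
      · have hwo : w ∈ Cgeᗮ := Submodule.sub_starProjection_mem_orthogonal u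
        exact (Submodule.mem_orthogonal' Cge w).mp hwo φ
          (Submodule.le_topologicalClosure _ (Submodule.subset_span ⟨hφ, hφle⟩))
    have hwV : w ∈ V := sub_mem huV (hCgeV (SetLike.coe_mem _))
    have hww : (inner ℝ w w : ℝ) = 0 := inner_zero_of_mem_sclos hwperp (hV ▸ hwV)
    have hw0 : w = 0 := inner_self_eq_zero.mp hww
    have : u = (Submodule.orthogonalProjectionOnto Cge u : L2S J) := by
      rw [hwdef] at hw0; exact sub_eq_zero.mp hw0
    rw [this]; exact SetLike.coe_mem _
  -- self-localization of v
  have hvCge : v ∈ Cge := by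
    set v1 := v - (Submodule.orthogonalProjectionOnto Cge v : L2S J) with hv1def
    have hv1o : v1 ∈ Cgeᗮ := Submodule.sub_starProjection_mem_orthogonal v
    have hv1V : v1 ∈ V := sub_mem hv (hCgeV (SetLike.coe_mem _))
    have hv1Cle : v1 ∈ Cle := by
      refine hmemCle v1 hv1V ?_
      intro φ hφ
      exact (Submodule.mem_orthogonal' Cge v1).mp hv1o φ
        (Submodule.le_topologicalClosure _ (Submodule.subset_span hφ))
    have hs1 : SuppIn J v1 (Set.Iic q) := hCle_supp v1 hv1Cle
    have hs2 : SuppIn J v1 (Set.Ici p) := by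
      have hm : v1 ∈ suppM J (Set.Ici p) :=
        sub_mem (mem_suppM.mpr hvs)
          (mem_suppM.mpr (hCge_supp _ (SetLike.coe_mem _)))
      exact mem_suppM.mp hm
    have hs3 : SuppIn J v1 (Set.Icc p q) := by
      have := suppIn_inter hs2 hs1
      rwa [Set.Ici_inter_Iic] at this
    have hvv1 : (inner ℝ v v1 : ℝ) = 0 := hvperp v1 hv1V hs3
    have h11 : (inner ℝ v1 v1 : ℝ) = 0 := by
      rw [hv1def, inner_sub_left]
      rw [← hv1def, hvv1]
      rw [(Submodule.mem_orthogonal Cge v1).mp hv1o _ (SetLike.coe_mem _), sub_zero]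
    have h0 : v1 = 0 := inner_self_eq_zero.mp h11
    have : v = (Submodule.orthogonalProjectionOnto Cge v : L2S J) := by
      rw [hv1def] at h0; exact sub_eq_zero.mp h0
    rw [this]; exact SetLike.coe_mem _
  -- split y
  set u1 := y - (Submodule.orthogonalProjectionOnto Cge y : L2S J) with hu1def
  have hu1o : u1 ∈ Cgeᗮ := Submodule.sub_starProjection_mem_orthogonal y
  have hu1V : u1 ∈ V := sub_mem hy (hCgeV (SetLike.coe_mem _))
  have hu1Cle : u1 ∈ Cle := by
    refine hmemCle u1 hu1V ?_
    intro φ hφ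
    exact (Submodule.mem_orthogonal' Cge u1).mp hu1o φ
      (Submodule.le_topologicalClosure _ (Submodule.subset_span hφ))
  set u2 := (Submodule.orthogonalProjectionOnto Cge y : L2S J) with hu2def
  have hu2V : u2 ∈ V := hCgeV (SetLike.coe_mem _)
  have hs2a : SuppIn J u2 (Set.Ici p) := hCge_supp _ (SetLike.coe_mem _)
  have hs2b : SuppIn J u2 (Set.Iic q) := by
    have hm : u2 ∈ suppM J (Set.Iic q) := by
      have : u2 = y - u1 := by rw [hu1def]; abel
      rw [this]
      exact sub_mem (mem_suppM.mpr hys) (mem_suppM.mpr (hCle_supp u1 hu1Cle))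
    exact mem_suppM.mp hm
  have hs2 : SuppIn J u2 (Set.Icc p q) := by
    have := suppIn_inter hs2a hs2b
    rwa [Set.Ici_inter_Iic] at this
  have hy12 : y = u1 + u2 := by rw [hu1def, hu2def]; abel
  rw [hy12, inner_add_right]
  rw [hvperp u2 hu2V hs2]
  rw [real_inner_comm, hmut u1 hu1Cle v hvCge, zero_add]

/-- Mirror image of `cross`. -/
lemma cross' (hJm : MeasurableSet J) {Φ : Set (L2S J)}
    (horth : Φ.Pairwise (fun f g => (inner ℝ f g : ℝ) = 0))
    (hcov : Φ = ⋃ c ∈ ks, midAt J ks Φ c)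
    {V : Submodule ℝ (L2S J)} (hV : V = SClos J Φ)
    {p q : ℝ} (hp : p ∈ ks) (hq : q ∈ ks) (hpq : p < q)
    (htri : ∀ b ∈ ks, b ≤ p ∨ q ≤ b)
    {v y : L2S J} (hv : v ∈ V) (hvs : SuppIn J v (Set.Iic q))
    (hvperp : ∀ u ∈ V, SuppIn J u (Set.Icc p q) → (inner ℝ v u : ℝ) = 0)
    (hy : y ∈ V) (hys : SuppIn J y (Set.Ici p)) : (inner ℝ v y : ℝ) = 0 := by
  classical
  set Φle := {φ | φ ∈ Φ ∧ ∃ c ∈ ks, c ≤ p ∧ φ ∈ midAt J ks Φ c} with hΦledef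
  set Φge := Φ \ Φle with hΦgedef
  have hsuble : ∀ φ ∈ Φle, SuppIn J φ (Set.Iic q) := by
    rintro φ ⟨hφΦ, c, hc, hcp, hmid⟩
    refine suppIn_mono ?_ (suppIn_of_midAt hmid)
    rintro z ⟨_, h2⟩
    have hcq : succE ks c ≤ (q : EReal) := sInf_le ⟨q, ⟨hq, lt_of_le_of_lt hcp hpq⟩, rfl⟩
    exact EReal.coe_le_coe_iff.mp (h2.trans hcq)
  have hsubge : ∀ φ ∈ Φge, SuppIn J φ (Set.Ici p) := by
    rintro φ ⟨hφΦ, hφn⟩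
    have hφΦ' := hφΦ
    rw [hcov] at hφΦ'
    simp only [Set.mem_iUnion] at hφΦ'
    obtain ⟨c, hc, hmid⟩ := hφΦ'
    have hcq : q ≤ c := by
      rcases htri c hc with h | h
      · exact absurd ⟨hφΦ, c, hc, h, hmid⟩ hφn
      · exact h
    refine suppIn_mono ?_ (suppIn_of_midAt hmid)
    rintro z ⟨h1, _⟩
    have hpc : (p : EReal) ≤ predE ks c :=
      le_sSup ⟨p, ⟨hp, lt_of_lt_of_le hpq hcq⟩, rfl⟩
    exact EReal.coe_le_coe_iff.mp (hpc.trans h1)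
  set Cle := (Submodule.span ℝ Φle).topologicalClosure with hCledef
  set Cge := (Submodule.span ℝ Φge).topologicalClosure with hCgedef
  have hCleV : Cle ≤ V := by
    rw [hV]
    exact Submodule.topologicalClosure_mono (Submodule.span_mono (fun φ h => h.1))
  have hCgeV : Cge ≤ V := by
    rw [hV]
    exact Submodule.topologicalClosure_mono (Submodule.span_mono (fun φ h => h.1))
  have hCle_supp : ∀ u ∈ Cle, SuppIn J u (Set.Iic q) := by
    intro u hu
    refine suppIn_of_mem_closure measurableSet_Iic ?_ hu
    rw [Submodule.span_le]
    exact fun φ h => mem_suppM.mpr (hsuble φ h)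
  have hCge_supp : ∀ u ∈ Cge, SuppIn J u (Set.Ici p) := by
    intro u hu
    refine suppIn_of_mem_closure measurableSet_Ici ?_ hu
    rw [Submodule.span_le]
    exact fun φ h => mem_suppM.mpr (hsubge φ h)
  have hmutφ : ∀ φ ∈ Φle, ∀ w ∈ Cge, (inner ℝ φ w : ℝ) = 0 := by
    intro φ hφ w hw
    refine inner_zero_of_mem_closure ?_ hw
    intro z hz
    induction hz using Submodule.span_induction with
    | mem ψ hψ => exact horth hφ.1 hψ.1 (fun he => hψ.2 (he ▸ hφ))
    | zero => simp
    | add a b _ _ ha hb => rw [inner_add_right, ha, hb, add_zero]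
    | smul c a _ ha => rw [real_inner_smul_right, ha, mul_zero]
  have hmut : ∀ u ∈ Cle, ∀ w ∈ Cge, (inner ℝ u w : ℝ) = 0 := by
    intro u hu w hw
    refine inner_zero_of_mem_closure' ?_ hu
    intro z hz
    induction hz using Submodule.span_induction with
    | mem ψ hψ => exact hmutφ ψ hψ w hw
    | zero => simp
    | add a b _ _ ha hb => rw [inner_add_left, ha, hb, add_zero]
    | smul c a _ ha => rw [real_inner_smul_left, ha, mul_zero]
  have hmemCle : ∀ u ∈ V, (∀ φ ∈ Φge, (inner ℝ u φ : ℝ) = 0) → u ∈ Cle := by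
    intro u huV hperp
    set w := u - (Submodule.orthogonalProjectionOnto Cle u : L2S J) with hwdef
    have hwperp : ∀ φ ∈ Φ, (inner ℝ w φ : ℝ) = 0 := by
      intro φ hφ
      by_cases hφle : φ ∈ Φle
      · have hwo : w ∈ Cleᗮ := Submodule.sub_starProjection_mem_orthogonal u
        exact (Submodule.mem_orthogonal' Cle w).mp hwo φ
          (Submodule.le_topologicalClosure _ (Submodule.subset_span hφle))
      · have hφge : φ ∈ Φge := ⟨hφ, hφle⟩
        rw [hwdef, inner_sub_left, hperp φ hφge,
          hmut _ (SetLike.coe_mem _) φ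
            (Submodule.le_topologicalClosure _ (Submodule.subset_span hφge)), sub_zero]
    have hwV : w ∈ V := sub_mem huV (hCleV (SetLike.coe_mem _))
    have hww : (inner ℝ w w : ℝ) = 0 := inner_zero_of_mem_sclos hwperp (hV ▸ hwV)
    have hw0 : w = 0 := inner_self_eq_zero.mp hww
    have : u = (Submodule.orthogonalProjectionOnto Cle u : L2S J) := by
      rw [hwdef] at hw0; exact sub_eq_zero.mp hw0
    rw [this]; exact SetLike.coe_mem _
  -- self-localization of v (now into Cle)
  have hvCle : v ∈ Cle := by
    set v1 := v - (Submodule.orthogonalProjectionOnto Cle v : L2S J) with hv1def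
    have hv1o : v1 ∈ Cleᗮ := Submodule.sub_starProjection_mem_orthogonal v
    have hv1V : v1 ∈ V := sub_mem hv (hCleV (SetLike.coe_mem _))
    have hv1Cge : v1 ∈ Cge := by
      set w := v1 - (Submodule.orthogonalProjectionOnto Cge v1 : L2S J) with hwdef
      have hwperp : ∀ φ ∈ Φ, (inner ℝ w φ : ℝ) = 0 := by
        intro φ hφ
        by_cases hφle : φ ∈ Φle
        · rw [hwdef, inner_sub_left]
          have h1 : (inner ℝ v1 φ : ℝ) = 0 :=
            (Submodule.mem_orthogonal' Cle v1).mp hv1o φ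
              (Submodule.le_topologicalClosure _ (Submodule.subset_span hφle))
          rw [h1, real_inner_comm, hmutφ φ hφle _ (SetLike.coe_mem _), sub_zero]
        · have hwo : w ∈ Cgeᗮ := Submodule.sub_starProjection_mem_orthogonal v1
          exact (Submodule.mem_orthogonal' Cge w).mp hwo φ
            (Submodule.le_topologicalClosure _ (Submodule.subset_span ⟨hφ, hφle⟩))
      have hwV : w ∈ V := sub_mem hv1V (hCgeV (SetLike.coe_mem _))
      have hww : (inner ℝ w w : ℝ) = 0 := inner_zero_of_mem_sclos hwperp (hV ▸ hwV)
      have hw0 : w = 0 := inner_self_eq_zero.mp hww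
      have : v1 = (Submodule.orthogonalProjectionOnto Cge v1 : L2S J) := by
        rw [hwdef] at hw0; exact sub_eq_zero.mp hw0
      rw [this]; exact SetLike.coe_mem _
    have hs1 : SuppIn J v1 (Set.Ici p) := hCge_supp v1 hv1Cge
    have hs2 : SuppIn J v1 (Set.Iic q) := by
      have hm : v1 ∈ suppM J (Set.Iic q) :=
        sub_mem (mem_suppM.mpr hvs)
          (mem_suppM.mpr (hCle_supp _ (SetLike.coe_mem _)))
      exact mem_suppM.mp hm
    have hs3 : SuppIn J v1 (Set.Icc p q) := by
      have := suppIn_inter hs1 hs2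
      rwa [Set.Ici_inter_Iic] at this
    have hvv1 : (inner ℝ v v1 : ℝ) = 0 := hvperp v1 hv1V hs3
    have h11 : (inner ℝ v1 v1 : ℝ) = 0 := by
      rw [hv1def, inner_sub_left]
      rw [← hv1def, hvv1]
      rw [(Submodule.mem_orthogonal Cle v1).mp hv1o _ (SetLike.coe_mem _), sub_zero]
    have h0 : v1 = 0 := inner_self_eq_zero.mp h11
    have : v = (Submodule.orthogonalProjectionOnto Cle v : L2S J) := by
      rw [hv1def] at h0; exact sub_eq_zero.mp h0
    rw [this]; exact SetLike.coe_mem _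
  -- split y (mirrored: project onto Cle)
  set u1 := y - (Submodule.orthogonalProjectionOnto Cle y : L2S J) with hu1def
  have hu1o : u1 ∈ Cleᗮ := Submodule.sub_starProjection_mem_orthogonal y
  have hu1V : u1 ∈ V := sub_mem hy (hCleV (SetLike.coe_mem _))
  have hu1Cge : u1 ∈ Cge := by
    set w := u1 - (Submodule.orthogonalProjectionOnto Cge u1 : L2S J) with hwdef
    have hwperp : ∀ φ ∈ Φ, (inner ℝ w φ : ℝ) = 0 := by
      intro φ hφ
      by_cases hφle : φ ∈ Φle
      · rw [hwdef, inner_sub_left]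
        have h1 : (inner ℝ u1 φ : ℝ) = 0 :=
          (Submodule.mem_orthogonal' Cle u1).mp hu1o φ
            (Submodule.le_topologicalClosure _ (Submodule.subset_span hφle))
        rw [h1, real_inner_comm, hmutφ φ hφle _ (SetLike.coe_mem _), sub_zero]
      · have hwo : w ∈ Cgeᗮ := Submodule.sub_starProjection_mem_orthogonal u1
        exact (Submodule.mem_orthogonal' Cge w).mp hwo φ
          (Submodule.le_topologicalClosure _ (Submodule.subset_span ⟨hφ, hφle⟩))
    have hwV : w ∈ V := sub_mem hu1V (hCgeV (SetLike.coe_mem _))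
    have hww : (inner ℝ w w : ℝ) = 0 := inner_zero_of_mem_sclos hwperp (hV ▸ hwV)
    have hw0 : w = 0 := inner_self_eq_zero.mp hww
    have : u1 = (Submodule.orthogonalProjectionOnto Cge u1 : L2S J) := by
      rw [hwdef] at hw0; exact sub_eq_zero.mp hw0
    rw [this]; exact SetLike.coe_mem _
  set u2 := (Submodule.orthogonalProjectionOnto Cle y : L2S J) with hu2def
  have hu2V : u2 ∈ V := hCleV (SetLike.coe_mem _)
  have hs2a : SuppIn J u2 (Set.Iic q) := hCle_supp _ (SetLike.coe_mem _)
  have hs2b : SuppIn J u2 (Set.Ici p) := by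
    have hm : u2 ∈ suppM J (Set.Ici p) := by
      have : u2 = y - u1 := by rw [hu1def]; abel
      rw [this]
      exact sub_mem (mem_suppM.mpr hys) (mem_suppM.mpr (hCge_supp u1 hu1Cge))
    exact mem_suppM.mp hm
  have hs2 : SuppIn J u2 (Set.Icc p q) := by
    have := suppIn_inter hs2b hs2a
    rwa [Set.Ici_inter_Iic] at this
  have hy12 : y = u1 + u2 := by rw [hu1def, hu2def]; abel
  rw [hy12, inner_add_right]
  rw [hvperp u2 hu2V hs2]
  rw [hmut v hvCle u1 hu1Cge, zero_add]

end Cross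

end KWAux

set_option maxHeartbeats 2000000 in
open KnotWavelet in
theorem What_dim_and_subset_Wbar
    (J ks : Set ℝ) (hJ : J.OrdConnected) (hks : IsKnotSeq J ks)
    (Φ₀ Φ₁ : Set (L2S J))
    (h₀ : OrthoCenteredBasis J ks Φ₀) (h₁ : OrthoCenteredBasis J ks Φ₁)
    (V₀ V₁ : Submodule ℝ (L2S J))
    (hV₀ : V₀ = SClos J Φ₀) (hV₁ : V₁ = SClos J Φ₁) (hle : V₀ ≤ V₁) :
    ∀ a ∈ ks,
      (Module.finrank ℝ ↥(What J ks V₀ V₁ a) : ℤ) =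
          (Module.finrank ℝ ↥(Vbar J ks V₁ a) : ℤ) -
            (Module.finrank ℝ ↥(Ysp J ks V₀ V₁ a) : ℤ) ∧
      What J ks V₀ V₁ a ≤ Wbar J ks V₀ V₁ a := by
  classical
  obtain ⟨⟨hloc₀, hcov₀, _⟩, horth₀⟩ := h₀
  obtain ⟨⟨hloc₁, hcov₁, _⟩, horth₁⟩ := h₁
  have hJm : MeasurableSet J := hJ.measurableSet
  have hV₀cl : IsClosed (V₀ : Set (L2S J)) := by
    rw [hV₀]; exact (Submodule.span ℝ Φ₀).isClosed_topologicalClosure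
  have hV₁cl : IsClosed (V₁ : Set (L2S J)) := by
    rw [hV₁]; exact (Submodule.span ℝ Φ₁).isClosed_topologicalClosure
  intro a ha
  -- abbreviations (as plain `have`-level terms)
  have hguard0 : ∀ (V : Submodule ℝ (L2S J)),
      VbrevePred J ks V a ≤ KWAux.suppM J (IccPS ks a) ⊓ V := by
    intro V
    unfold VbrevePred
    split_ifs with hgd
    · intro u hu
      exact ⟨KWAux.mem_suppM.mpr (KWAux.suppIn_mono KWAux.IccP_subset_IccPS hu.2), hu.1⟩
    · exact bot_le
  have hbreve0 : ∀ (V : Submodule ℝ (L2S J)),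
      Vbreve J ks V a ≤ KWAux.suppM J (IccPS ks a) ⊓ V := by
    intro V u hu
    exact ⟨KWAux.mem_suppM.mpr (KWAux.suppIn_mono KWAux.IccS_subset_IccPS hu.2), hu.1⟩
  have hK_le : ∀ (V : Submodule ℝ (L2S J)),
      VbrevePred J ks V a ⊔ Vbreve J ks V a ≤ KWAux.suppM J (IccPS ks a) ⊓ V :=
    fun V => sup_le (hguard0 V) (hbreve0 V)
  have hKmono : VbrevePred J ks V₀ a ⊔ Vbreve J ks V₀ a ≤
      VbrevePred J ks V₁ a ⊔ Vbreve J ks V₁ a := by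
    refine sup_le_sup ?_ ?_
    · unfold VbrevePred
      split_ifs with hgd
      · exact fun u hu => ⟨hle hu.1, hu.2⟩
      · exact le_rfl
    · exact fun u hu => ⟨hle hu.1, hu.2⟩
  -- finite dimensionality
  haveI hfd₀ : FiniteDimensional ℝ ↥(Vmid J ks V₀ a) :=
    KWAux.finiteDimensional_Vmid hJ hks horth₀ hloc₀ hV₀ ha
  haveI hfd₁ : FiniteDimensional ℝ ↥(Vmid J ks V₁ a) :=
    KWAux.finiteDimensional_Vmid hJ hks horth₁ hloc₁ hV₁ ha
  haveI hfdA : FiniteDimensional ℝ ↥(Vbar J ks V₀ a) :=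
    Module.Finite.map (Vmid J ks V₀ a) _
  haveI hfdB : FiniteDimensional ℝ ↥(Vbar J ks V₁ a) :=
    Module.Finite.map (Vmid J ks V₁ a) _
  have hAcl : IsClosed ((Vbar J ks V₀ a : Submodule ℝ (L2S J)) : Set (L2S J)) :=
    (Vbar J ks V₀ a).closed_of_finiteDimensional
  have hAbar : (Vbar J ks V₀ a).topologicalClosure = Vbar J ks V₀ a :=
    hAcl.submodule_topologicalClosure_eq
  -- the map `I - P_{Ā}`
  have hWhat : What J ks V₀ V₁ a =
      (Vbar J ks V₁ a).map (LinearMap.id - projL (Vbar J ks V₀ a)) := rfl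
  have hgapp : ∀ u : L2S J, ((LinearMap.id - projL (Vbar J ks V₀ a) : L2S J →ₗ[ℝ] L2S J)) u =
      u - (Submodule.orthogonalProjectionOnto (Vbar J ks V₀ a).topologicalClosure u : L2S J) := by
    intro u; rfl
  have hker : ∀ u : L2S J,
      ((LinearMap.id - projL (Vbar J ks V₀ a) : L2S J →ₗ[ℝ] L2S J)) u = 0 ↔ u ∈ Vbar J ks V₀ a := by
    intro u
    rw [hgapp, sub_eq_zero, eq_comm, ← Submodule.starProjection_apply, Submodule.starProjection_eq_self_iff, hAbar]
  constructor
  · -- dimension count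
    have h1 := LinearMap.finrank_range_add_finrank_ker
      ((LinearMap.id - projL (Vbar J ks V₀ a)).domRestrict (Vbar J ks V₁ a))
    have hrange : LinearMap.range
        ((LinearMap.id - projL (Vbar J ks V₀ a)).domRestrict (Vbar J ks V₁ a)) =
        What J ks V₀ V₁ a := by
      rw [LinearMap.range_domRestrict, hWhat]
    have hkerdr : LinearMap.ker
        ((LinearMap.id - projL (Vbar J ks V₀ a)).domRestrict (Vbar J ks V₁ a)) =
        (Ysp J ks V₀ V₁ a).comap (Vbar J ks V₁ a).subtype := by
      ext u
      simp only [LinearMap.mem_ker, LinearMap.domRestrict_apply, Submodule.mem_comap,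
        Submodule.subtype_apply]
      rw [hker]
      constructor
      · intro h; exact ⟨h, u.2⟩
      · intro h; exact h.1
    have hYle : Ysp J ks V₀ V₁ a ≤ Vbar J ks V₁ a := inf_le_right
    have hfr : Module.finrank ℝ
        ↥((Ysp J ks V₀ V₁ a).comap (Vbar J ks V₁ a).subtype) =
        Module.finrank ℝ ↥(Ysp J ks V₀ V₁ a) :=
      (Submodule.comapSubtypeEquivOfLe hYle).finrank_eq
    rw [hrange, hkerdr, hfr] at h1
    omega
  · -- the inclusion Ŵ_a ≤ W̄_a
    rw [hWhat]
    rintro w hw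
    rw [Submodule.mem_map] at hw
    obtain ⟨b, hbB, rfl⟩ := hw
    rw [hgapp]
    -- dissect b
    rw [show Vbar J ks V₁ a = (Vmid J ks V₁ a).map
      (LinearMap.id - projL (VbrevePred J ks V₁ a ⊔ Vbreve J ks V₁ a)) from rfl,
      Submodule.mem_map] at hbB
    obtain ⟨v1, hv1, rfl⟩ := hbB
    have hKtc₁ : (VbrevePred J ks V₁ a ⊔ Vbreve J ks V₁ a).topologicalClosure ≤
        KWAux.suppM J (IccPS ks a) ⊓ V₁ := by
      refine Submodule.topologicalClosure_minimal _ (hK_le V₁) ?_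
      exact (KWAux.isClosed_suppM (KWAux.measurableSet_IccPS a)).inter hV₁cl
    have hKtc₀ : (VbrevePred J ks V₀ a ⊔ Vbreve J ks V₀ a).topologicalClosure ≤
        KWAux.suppM J (IccPS ks a) ⊓ V₀ := by
      refine Submodule.topologicalClosure_minimal _ (hK_le V₀) ?_
      exact (KWAux.isClosed_suppM (KWAux.measurableSet_IccPS a)).inter hV₀cl
    set b := ((LinearMap.id - projL (VbrevePred J ks V₁ a ⊔ Vbreve J ks V₁ a) : L2S J →ₗ[ℝ] L2S J)) v1 with hbdef
    have hbsplit : b = v1 - (Submodule.orthogonalProjectionOnto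
        (VbrevePred J ks V₁ a ⊔ Vbreve J ks V₁ a).topologicalClosure v1 : L2S J) := rfl
    have hprojmem := SetLike.coe_mem (Submodule.orthogonalProjectionOnto
        (VbrevePred J ks V₁ a ⊔ Vbreve J ks V₁ a).topologicalClosure v1)
    have hbV₁ : b ∈ V₁ := by
      rw [hbsplit]
      exact sub_mem hv1.1 (hKtc₁ hprojmem).2
    have hbsupp : SuppIn J b (IccPS ks a) := by
      refine KWAux.mem_suppM.mp ?_
      rw [hbsplit]
      exact sub_mem (KWAux.mem_suppM.mpr hv1.2) (hKtc₁ hprojmem).1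
    have hbperpK₁ : ∀ u ∈ (VbrevePred J ks V₁ a ⊔ Vbreve J ks V₁ a).topologicalClosure,
        (inner ℝ b u : ℝ) = 0 := by
      intro u hu
      have := Submodule.sub_starProjection_mem_orthogonal
        (K := (VbrevePred J ks V₁ a ⊔ Vbreve J ks V₁ a).topologicalClosure) v1
      exact (Submodule.mem_orthogonal' _ _).mp this u hu
    -- dissect x
    set x := (Submodule.orthogonalProjectionOnto (Vbar J ks V₀ a).topologicalClosure b : L2S J) with hxdef
    have hxA : x ∈ Vbar J ks V₀ a := by
      rw [← hAbar]; exact SetLike.coe_mem _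
    have hAprops : ∀ u ∈ Vbar J ks V₀ a, u ∈ V₀ ∧ SuppIn J u (IccPS ks a) ∧
        (∀ z ∈ (VbrevePred J ks V₀ a ⊔ Vbreve J ks V₀ a).topologicalClosure,
          (inner ℝ u z : ℝ) = 0) := by
      rintro u hu
      rw [show Vbar J ks V₀ a = (Vmid J ks V₀ a).map
        (LinearMap.id - projL (VbrevePred J ks V₀ a ⊔ Vbreve J ks V₀ a)) from rfl,
        Submodule.mem_map] at hu
      obtain ⟨v0, hv0, rfl⟩ := hu
      have hsplit : ((LinearMap.id - projL (VbrevePred J ks V₀ a ⊔ Vbreve J ks V₀ a) : L2S J →ₗ[ℝ] L2S J)) v0 =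
          v0 - (Submodule.orthogonalProjectionOnto
            (VbrevePred J ks V₀ a ⊔ Vbreve J ks V₀ a).topologicalClosure v0 : L2S J) := rfl
      have hpm := SetLike.coe_mem (Submodule.orthogonalProjectionOnto
        (VbrevePred J ks V₀ a ⊔ Vbreve J ks V₀ a).topologicalClosure v0)
      refine ⟨?_, ?_, ?_⟩
      · rw [hsplit]; exact sub_mem hv0.1 (hKtc₀ hpm).2
      · refine KWAux.mem_suppM.mp ?_
        rw [hsplit]
        exact sub_mem (KWAux.mem_suppM.mpr hv0.2) (hKtc₀ hpm).1
      · intro z hz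
        have := Submodule.sub_starProjection_mem_orthogonal
          (K := (VbrevePred J ks V₀ a ⊔ Vbreve J ks V₀ a).topologicalClosure) v0
        exact (Submodule.mem_orthogonal' _ _).mp this z hz
    have hxV₀ : x ∈ V₀ := (hAprops x hxA).1
    have hxsupp : SuppIn J x (IccPS ks a) := (hAprops x hxA).2.1
    have hxperpK₀ := (hAprops x hxA).2.2
    have hbperpK₀ : ∀ u ∈ (VbrevePred J ks V₀ a ⊔ Vbreve J ks V₀ a).topologicalClosure,
        (inner ℝ b u : ℝ) = 0 :=
      fun u hu => hbperpK₁ u (Submodule.topologicalClosure_mono hKmono hu)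
    have hwperpK₀ : ∀ u ∈ (VbrevePred J ks V₀ a ⊔ Vbreve J ks V₀ a).topologicalClosure,
        (inner ℝ (b - x) u : ℝ) = 0 := by
      intro u hu
      rw [inner_sub_left, hbperpK₀ u hu, hxperpK₀ u hu, sub_zero]
    have hwperpA : ∀ u ∈ (Vbar J ks V₀ a).topologicalClosure,
        (inner ℝ (b - x) u : ℝ) = 0 := by
      intro u hu
      have := Submodule.sub_starProjection_mem_orthogonal
        (K := (Vbar J ks V₀ a).topologicalClosure) b
      exact (Submodule.mem_orthogonal' _ _).mp this u hu
    have hwsupp : SuppIn J (b - x) (IccPS ks a) :=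
      KWAux.mem_suppM.mp (sub_mem (KWAux.mem_suppM.mpr hbsupp) (KWAux.mem_suppM.mpr hxsupp))
    have hwV₁ : b - x ∈ V₁ := sub_mem hbV₁ (hle hxV₀)
    -- crux: b - x ⊥ Φ₀
    have hwperpΦ₀ : ∀ φ ∈ Φ₀, (inner ℝ (b - x) φ : ℝ) = 0 := by
      intro φ hφ
      have hφ' := hφ
      rw [hcov₀] at hφ'
      simp only [Set.mem_iUnion] at hφ'
      obtain ⟨c, hc, hmid⟩ := hφ'
      have hφV₀ : φ ∈ V₀ := hV₀ ▸ KWAux.mem_SClos_of_mem (KWAux.mem_Phi_of_midAt hmid)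
      have hφsupp : SuppIn J φ (IccPS ks c) := KWAux.suppIn_of_midAt hmid
      rcases lt_trichotomy c a with hca | hceq | hac
      · by_cases hsep : succE ks c ≤ predE ks a
        · refine KWAux.inner_zero_of_disj hwsupp hφsupp ?_
          refine KWAux.null_of_subset_singleton (r := (predE ks a).toReal) ?_
          rintro z ⟨⟨hz1, _⟩, ⟨_, hz4⟩⟩
          have hzz : (z : EReal) = predE ks a := le_antisymm (hz4.trans hsep) hz1
          simp only [Set.mem_singleton_iff]
          rw [← hzz, EReal.toReal_coe]
        · obtain ⟨hpred, hsucc⟩ := KWAux.adj_facts hc ha hca hsep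
          have htri : ∀ b' ∈ ks, b' ≤ c ∨ a ≤ b' := by
            intro b' hb'
            rcases le_or_gt b' c with h | h
            · exact Or.inl h
            · refine Or.inr ?_
              have : succE ks c ≤ (b' : EReal) := sInf_le ⟨b', ⟨hb', h⟩, rfl⟩
              rw [hsucc] at this
              exact_mod_cast this
          have hsuppw : SuppIn J (b - x) (Set.Ici c) := by
            refine KWAux.suppIn_mono ?_ hwsupp
            rintro z ⟨h1, _⟩
            rw [hpred] at h1
            exact EReal.coe_le_coe_iff.mp h1
          have hsuppb : SuppIn J b (Set.Ici c) := by
            refine KWAux.suppIn_mono ?_ hbsupp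
            rintro z ⟨h1, _⟩
            rw [hpred] at h1
            exact EReal.coe_le_coe_iff.mp h1
          have hsuppx : SuppIn J x (Set.Ici c) := by
            refine KWAux.suppIn_mono ?_ hxsupp
            rintro z ⟨h1, _⟩
            rw [hpred] at h1
            exact EReal.coe_le_coe_iff.mp h1
          have hφIic : SuppIn J φ (Set.Iic a) := by
            refine KWAux.suppIn_mono ?_ hφsupp
            rintro z ⟨_, h2⟩
            rw [hsucc] at h2
            exact EReal.coe_le_coe_iff.mp h2
          have hIccP : IccP ks a = Set.Icc c a := by
            ext z
            constructor
            · rintro ⟨h1, h2⟩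
              rw [hpred] at h1
              exact ⟨EReal.coe_le_coe_iff.mp h1, h2⟩
            · rintro ⟨h1, h2⟩
              exact ⟨hpred ▸ EReal.coe_le_coe_iff.mpr h1, h2⟩
          have hguard : {b' ∈ ks | b' < a}.Nonempty := ⟨c, hc, hca⟩
          have hb0 : (inner ℝ b φ : ℝ) = 0 := by
            refine KWAux.cross hJm horth₁ hcov₁ hV₁ hc ha hca htri hbV₁ hsuppb ?_
              (hle hφV₀) hφIic
            intro u huV husupp
            refine hbperpK₁ u (Submodule.le_topologicalClosure _ (Submodule.mem_sup_left ?_))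
            show u ∈ VbrevePred J ks V₁ a
            unfold VbrevePred
            rw [if_pos hguard]
            exact ⟨huV, by rw [hIccP]; exact husupp⟩
          have hx0 : (inner ℝ x φ : ℝ) = 0 := by
            refine KWAux.cross hJm horth₀ hcov₀ hV₀ hc ha hca htri hxV₀ hsuppx ?_
              hφV₀ hφIic
            intro u huV husupp
            refine hxperpK₀ u (Submodule.le_topologicalClosure _ (Submodule.mem_sup_left ?_))
            show u ∈ VbrevePred J ks V₀ a
            unfold VbrevePred
            rw [if_pos hguard]
            exact ⟨huV, by rw [hIccP]; exact husupp⟩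
          rw [inner_sub_left, hb0, hx0, sub_zero]
      · -- c = a : φ ∈ V_a
        rw [hceq] at hφsupp
        have hφmid : φ ∈ Vmid J ks V₀ a := ⟨hφV₀, hφsupp⟩
        have hφbar : ((LinearMap.id - projL (VbrevePred J ks V₀ a ⊔ Vbreve J ks V₀ a) : L2S J →ₗ[ℝ] L2S J)) φ ∈
            Vbar J ks V₀ a := by
          rw [show Vbar J ks V₀ a = (Vmid J ks V₀ a).map
            (LinearMap.id - projL (VbrevePred J ks V₀ a ⊔ Vbreve J ks V₀ a)) from rfl]
          exact Submodule.mem_map_of_mem hφmid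
        have hsplitφ : φ = (Submodule.orthogonalProjectionOnto
            (VbrevePred J ks V₀ a ⊔ Vbreve J ks V₀ a).topologicalClosure φ : L2S J) +
            ((LinearMap.id - projL (VbrevePred J ks V₀ a ⊔ Vbreve J ks V₀ a) : L2S J →ₗ[ℝ] L2S J)) φ := by
          have : ((LinearMap.id - projL (VbrevePred J ks V₀ a ⊔ Vbreve J ks V₀ a) : L2S J →ₗ[ℝ] L2S J)) φ =
              φ - (Submodule.orthogonalProjectionOnto
              (VbrevePred J ks V₀ a ⊔ Vbreve J ks V₀ a).topologicalClosure φ : L2S J) := rfl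
          rw [this]; abel
        rw [hsplitφ, inner_add_right]
        rw [hwperpK₀ _ (SetLike.coe_mem _)]
        rw [hwperpA _ (Submodule.le_topologicalClosure _ hφbar), add_zero]
      · -- a < c
        by_cases hsep : succE ks a ≤ predE ks c
        · refine KWAux.inner_zero_of_disj hwsupp hφsupp ?_
          refine KWAux.null_of_subset_singleton (r := (succE ks a).toReal) ?_
          rintro z ⟨⟨_, hz2⟩, ⟨hz3, _⟩⟩
          have hzz : (z : EReal) = succE ks a := le_antisymm hz2 (by
            calc succE ks a ≤ predE ks c := hsep
            _ ≤ (z : EReal) := hz3)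
          simp only [Set.mem_singleton_iff]
          rw [← hzz, EReal.toReal_coe]
        · obtain ⟨hpred, hsucc⟩ := KWAux.adj_facts ha hc hac hsep
          have htri : ∀ b' ∈ ks, b' ≤ a ∨ c ≤ b' := by
            intro b' hb'
            rcases le_or_gt b' a with h | h
            · exact Or.inl h
            · refine Or.inr ?_
              have : succE ks a ≤ (b' : EReal) := sInf_le ⟨b', ⟨hb', h⟩, rfl⟩
              rw [hsucc] at this
              exact_mod_cast this
          have hsuppb : SuppIn J b (Set.Iic c) := by
            refine KWAux.suppIn_mono ?_ hbsupp
            rintro z ⟨_, h2⟩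
            rw [hsucc] at h2
            exact EReal.coe_le_coe_iff.mp h2
          have hsuppx : SuppIn J x (Set.Iic c) := by
            refine KWAux.suppIn_mono ?_ hxsupp
            rintro z ⟨_, h2⟩
            rw [hsucc] at h2
            exact EReal.coe_le_coe_iff.mp h2
          have hφIci : SuppIn J φ (Set.Ici a) := by
            refine KWAux.suppIn_mono ?_ hφsupp
            rintro z ⟨h1, _⟩
            rw [hpred] at h1
            exact EReal.coe_le_coe_iff.mp h1
          have hIccS : IccS ks a = Set.Icc a c := by
            ext z
            constructor
            · rintro ⟨h1, h2⟩
              rw [hsucc] at h2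
              exact ⟨h1, EReal.coe_le_coe_iff.mp h2⟩
            · rintro ⟨h1, h2⟩
              exact ⟨h1, hsucc ▸ EReal.coe_le_coe_iff.mpr h2⟩
          have hb0 : (inner ℝ b φ : ℝ) = 0 := by
            refine KWAux.cross' hJm horth₁ hcov₁ hV₁ ha hc hac htri hbV₁ hsuppb ?_
              (hle hφV₀) hφIci
            intro u huV husupp
            refine hbperpK₁ u (Submodule.le_topologicalClosure _ (Submodule.mem_sup_right ?_))
            show u ∈ Vbreve J ks V₁ a
            refine ⟨huV, ?_⟩
            show SuppIn J u (IccS ks a)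
            rw [hIccS]; exact husupp
          have hx0 : (inner ℝ x φ : ℝ) = 0 := by
            refine KWAux.cross' hJm horth₀ hcov₀ hV₀ ha hc hac htri hxV₀ hsuppx ?_
              hφV₀ hφIci
            intro u huV husupp
            refine hxperpK₀ u (Submodule.le_topologicalClosure _ (Submodule.mem_sup_right ?_))
            show u ∈ Vbreve J ks V₀ a
            refine ⟨huV, ?_⟩
            show SuppIn J u (IccS ks a)
            rw [hIccS]; exact husupp
          rw [inner_sub_left, hb0, hx0, sub_zero]
    -- b - x ⊥ V₀
    have hwV₀perp : b - x ∈ V₀ᗮ := by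
      rw [Submodule.mem_orthogonal]
      intro u hu
      rw [real_inner_comm]
      exact KWAux.inner_zero_of_mem_sclos hwperpΦ₀ (hV₀ ▸ hu)
    -- conclude : membership in W̄_a
    have hWsp : b - x ∈ Wsp J V₀ V₁ := ⟨hwV₁, hwV₀perp⟩
    refine ⟨⟨hWsp, hwsupp⟩, (Submodule.mem_orthogonal _ _).mpr ?_⟩
    intro u hu
    obtain ⟨u₁, hu₁, u₂, hu₂, rfl⟩ := Submodule.mem_sup.mp hu
    have hWle : Wsp J V₀ V₁ ≤ V₁ := inf_le_left
    have hWperp : Wsp J V₀ V₁ ≤ V₀ᗮ := inf_le_right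
    have h₁ : (inner ℝ (b - x) u₁ : ℝ) = 0 := by
      revert hu₁
      show u₁ ∈ VbrevePred J ks (Wsp J V₀ V₁) a → _
      unfold VbrevePred
      split_ifs with hgd
      · intro hu₁
        have hb1 : (inner ℝ b u₁ : ℝ) = 0 := by
          refine hbperpK₁ u₁ (Submodule.le_topologicalClosure _ (Submodule.mem_sup_left ?_))
          show u₁ ∈ VbrevePred J ks V₁ a
          unfold VbrevePred
          rw [if_pos hgd]
          exact ⟨hWle hu₁.1, hu₁.2⟩
        have hx1 : (inner ℝ x u₁ : ℝ) = 0 :=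
          (Submodule.mem_orthogonal V₀ u₁).mp (hWperp hu₁.1) x hxV₀
        rw [inner_sub_left, hb1, hx1, sub_zero]
      · intro hu₁
        have : u₁ = 0 := hu₁
        rw [this, inner_zero_right]
    have h₂ : (inner ℝ (b - x) u₂ : ℝ) = 0 := by
      have hb2 : (inner ℝ b u₂ : ℝ) = 0 := by
        refine hbperpK₁ u₂ (Submodule.le_topologicalClosure _ (Submodule.mem_sup_right ?_))
        show u₂ ∈ Vbreve J ks V₁ a
        exact ⟨hWle hu₂.1, hu₂.2⟩
      have hx2 : (inner ℝ x u₂ : ℝ) = 0 :=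
        (Submodule.mem_orthogonal V₀ u₂).mp (hWperp hu₂.1) x hxV₀
      rw [inner_sub_left, hb2, hx2, sub_zero]
    rw [real_inner_comm, inner_add_right, h₁, h₂, add_zero]
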